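/- Let K be a field of characteristic zero containing all roots of unity. Any element of PGL(2,K) of finite order is either diagonalisable (conjugate to a diagonal matrix class) or is an involution conjugate to the class of the matrix [[0,g],[1,0]] for some g in K*. -/

import Mathlib

open Matrix Polynomial

section Aux

variable {K : Type*} [Field K]

lemma gl2_mem_center_iff (A : GL (Fin 2) K) :
    A ∈ Subgroup.center (GL (Fin 2) K) ↔ ∃ a : K, (A : Matrix (Fin 2) (Fin 2) K) = a • 1 := by
  constructor
  · intro hA
    rw [Subgroup.mem_center_iff] at hA
    have h : (A : Matrix (Fin 2) (Fin 2) K) ∈ Set.range (Matrix.scalar (Fin 2)) := by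
      apply Matrix.mem_range_scalar_of_commute_transvectionStruct
      intro t
      have ht : (Matrix.det t.toMatrix) ≠ 0 := by simp
      have h2 := congrArg Units.val
        (hA (Matrix.GeneralLinearGroup.mkOfDetNeZero t.toMatrix ht))
      have h3 : (Matrix.GeneralLinearGroup.mkOfDetNeZero t.toMatrix ht : Matrix (Fin 2) (Fin 2) K)
          = t.toMatrix := rfl
      simp only [Units.val_mul, h3] at h2
      exact h2
    obtain ⟨a, ha⟩ := h
    exact ⟨a, by rw [← ha, Matrix.scalar_apply, Matrix.smul_one_eq_diagonal]⟩
  · rintro ⟨a, ha⟩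
    rw [Subgroup.mem_center_iff]
    intro B
    apply Units.ext
    simp only [Units.val_mul, ha, Matrix.smul_mul, Matrix.mul_smul, Matrix.one_mul,
      Matrix.mul_one]

lemma ch2 (N : Matrix (Fin 2) (Fin 2) K) :
    N ^ 2 = (Matrix.trace N) • N - (Matrix.det N) • 1 := by
  ext i j
  rw [pow_two]
  fin_cases i <;> fin_cases j <;>
    simp [Matrix.mul_apply, Fin.sum_univ_two, Matrix.trace_fin_two, Matrix.det_fin_two,
      Matrix.one_apply] <;> ring

lemma binom_nil (M : Matrix (Fin 2) (Fin 2) K) (hM : M * M = 0) (e : K) (m : ℕ) :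
    (1 + e • M) ^ m = 1 + ((m : K) * e) • M := by
  induction m with
  | zero => simp
  | succ k ih =>
    rw [pow_succ, ih]
    push_cast
    rw [add_mul, mul_add, mul_add, one_mul, mul_one, Matrix.one_mul, Matrix.mul_smul,
      smul_mul_assoc, hM]
    rw [smul_zero, smul_zero, add_zero]
    rw [add_assoc, ← add_smul]
    ring_nf

lemma det_sub_smul_one (N : Matrix (Fin 2) (Fin 2) K) (r : K) :
    Matrix.det (N - r • 1) = r ^ 2 - Matrix.trace N * r + Matrix.det N := by
  simp [Matrix.det_fin_two, Matrix.trace_fin_two, Matrix.one_apply]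
  ring

lemma companion_conj (N : Matrix (Fin 2) (Fin 2) K) (hsc : ¬∃ a : K, N = a • 1) :
    ∃ C : Matrix (Fin 2) (Fin 2) K, Matrix.det C ≠ 0 ∧
      N * C = C * !![0, -Matrix.det N; 1, Matrix.trace N] := by
  by_cases hc : N 1 0 ≠ 0
  · refine ⟨!![1, N 0 0; 0, N 1 0], by simpa [Matrix.det_fin_two] using hc, ?_⟩
    ext i j
    fin_cases i <;> fin_cases j <;>
      simp [Matrix.mul_apply, Fin.sum_univ_two, Matrix.det_fin_two, Matrix.trace_fin_two] <;>
      ring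
  · push_neg at hc
    by_cases hb : N 0 1 ≠ 0
    · refine ⟨!![0, N 0 1; 1, N 1 1], by simp [Matrix.det_fin_two, hb], ?_⟩
      ext i j
      fin_cases i <;> fin_cases j <;>
        simp [Matrix.mul_apply, Fin.sum_univ_two, Matrix.det_fin_two, Matrix.trace_fin_two, hc] <;>
        ring
    · push_neg at hb
      have had : N 0 0 ≠ N 1 1 := by
        intro h
        exact hsc ⟨N 0 0, by ext i j; fin_cases i <;> fin_cases j <;>
          simp [Matrix.one_apply, hb, hc, h]⟩
      refine ⟨!![1, N 0 0; 1, N 1 1],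
        by simp [Matrix.det_fin_two]; exact fun h => had (by linear_combination -h), ?_⟩
      ext i j
      fin_cases i <;> fin_cases j <;>
        simp [Matrix.mul_apply, Fin.sum_univ_two, Matrix.det_fin_two, Matrix.trace_fin_two,
          hb, hc] <;> ring

lemma comp_to_diag (τ δ r : K) (hr : r ^ 2 - τ * r + δ = 0) (hne : r ≠ τ - r) :
    ∃ C : Matrix (Fin 2) (Fin 2) K, Matrix.det C ≠ 0 ∧
      !![0, -δ; 1, τ] * C = C * !![r, 0; 0, τ - r] := by
  refine ⟨!![-(τ - r), -r; 1, 1], ?_, ?_⟩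
  · simp [Matrix.det_fin_two]
    intro h
    exact hne (by linear_combination h)
  · ext i j
    fin_cases i <;> fin_cases j <;>
      simp [Matrix.mul_apply, Fin.sum_univ_two] <;>
      first
        | linear_combination hr
        | linear_combination -hr
        | linear_combination 2*hr
        | linear_combination -2*hr
        | ring

lemma det_aeval_prod (u : Matrix (Fin 2) (Fin 2) K) (t : Finset K) :
    Matrix.det (Polynomial.aeval u (∏ z ∈ t, (X - Polynomial.C z)))
      = ∏ z ∈ t, Matrix.det (u - z • 1) := by
  classical
  induction t using Finset.induction_on with
  | empty => simp
  | insert _ _ ha ih =>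
    rw [Finset.prod_insert ha, Finset.prod_insert ha, _root_.map_mul, Matrix.det_mul, ih]
    congr 2
    simp [Algebra.algebraMap_eq_smul_one]

end Aux

/-- `PGL₂ K`: the projective general linear group, `GL(2,K)` modulo its center
(the scalar matrices). -/
abbrev PGL2 (K : Type*) [Field K] :=
  GL (Fin 2) K ⧸ Subgroup.center (GL (Fin 2) K)

/-- Over a field `K` of characteristic zero containing all roots of
unity, any element of `PGL(2,K)` of finite order is either diagonalisable (conjugate
to the class of a diagonal matrix) or an involution conjugate to the class of
`[[0,t],[1,0]]` for some `t ∈ K*`. -/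
theorem pgl2_finite_order_diagonalisable_or_antidiagonal_involution
    (K : Type*) [Field K] [CharZero K]
    (hroots : ∀ n : ℕ, 0 < n → ∃ ζ : K, IsPrimitiveRoot ζ n)
    (g : PGL2 K) (hg : IsOfFinOrder g) :
    (∃ (c : PGL2 K) (d : GL (Fin 2) K) (a b : K),
        (d : Matrix (Fin 2) (Fin 2) K) = !![a, 0; 0, b] ∧
        g = c * (QuotientGroup.mk d) * c⁻¹) ∨
    (orderOf g = 2 ∧
      ∃ (c : PGL2 K) (m : GL (Fin 2) K) (t : K), t ≠ 0 ∧
        (m : Matrix (Fin 2) (Fin 2) K) = !![0, t; 1, 0] ∧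
        g = c * (QuotientGroup.mk m) * c⁻¹) := by
  obtain ⟨A, rfl⟩ := QuotientGroup.mk_surjective g
  set N : Matrix (Fin 2) (Fin 2) K := (A : Matrix (Fin 2) (Fin 2) K) with hN
  have hδ : Matrix.det N ≠ 0 := by
    have : IsUnit N := ⟨A, rfl⟩
    exact ((Matrix.isUnit_iff_isUnit_det N).1 this).ne_zero
  by_cases hsc : ∃ a : K, N = a • 1
  · obtain ⟨a, ha⟩ := hsc
    left
    refine ⟨1, A, a, a, ?_, by simp⟩
    show N = _
    rw [ha]
    ext i j; fin_cases i <;> fin_cases j <;> simp [Matrix.one_apply]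
  · set n := orderOf ((QuotientGroup.mk A) : PGL2 K) with hn
    have hnpos : 0 < n := hg.orderOf_pos
    have hcen : A ^ n ∈ Subgroup.center (GL (Fin 2) K) := by
      rw [← QuotientGroup.eq_one_iff, QuotientGroup.mk_pow]
      exact pow_orderOf_eq_one _
    obtain ⟨r, hr⟩ := (gl2_mem_center_iff _).1 hcen
    rw [Units.val_pow_eq_pow_val] at hr
    rw [← hN] at hr
    have hδn : Matrix.det N ^ n = r ^ 2 := by
      have h := congrArg Matrix.det hr
      rwa [Matrix.det_pow, Matrix.det_smul, Matrix.det_one, Fintype.card_fin, mul_one] at h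
    set τ := Matrix.trace N with hτdef
    set δ := Matrix.det N with hδdef
    have hCH : N ^ 2 = τ • N - δ • 1 := ch2 N
    by_cases hτ : τ = 0
    · right
      constructor
      · haveI : Fact (Nat.Prime 2) := ⟨Nat.prime_two⟩
        refine orderOf_eq_prime ?_ ?_
        · rw [← QuotientGroup.mk_pow, QuotientGroup.eq_one_iff, gl2_mem_center_iff]
          refine ⟨-δ, ?_⟩
          rw [Units.val_pow_eq_pow_val]
          show N ^ 2 = _
          rw [hCH, hτ, zero_smul, zero_sub, neg_smul]
        · intro h1
          rw [QuotientGroup.eq_one_iff, gl2_mem_center_iff] at h1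
          exact hsc h1
      · obtain ⟨C, hC, hNC⟩ := companion_conj N hsc
        rw [← hδdef, ← hτdef, hτ] at hNC
        have hMdet : Matrix.det !![(0:K), -δ; 1, 0] ≠ 0 := by
          rw [Matrix.det_fin_two_of]; simpa using hδ
        set Cgl := Matrix.GeneralLinearGroup.mkOfDetNeZero C hC with hCgl
        set Mgl := Matrix.GeneralLinearGroup.mkOfDetNeZero _ hMdet with hMgl
        have hA : A = Cgl * Mgl * Cgl⁻¹ := by
          rw [eq_mul_inv_iff_mul_eq]
          apply Units.ext
          show N * C = C * !![(0:K), -δ; 1, 0]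
          exact hNC
        refine ⟨QuotientGroup.mk Cgl, Mgl, -δ, by simpa using hδ, rfl, ?_⟩
        rw [hA, QuotientGroup.mk_mul, QuotientGroup.mk_mul, QuotientGroup.mk_inv]
    · -- τ ≠ 0
      set u := δ⁻¹ • N ^ 2 with hu_def
      have hu2 : u = (τ * δ⁻¹) • N - 1 := by
        rw [hu_def, hCH, smul_sub, smul_smul, smul_smul, inv_mul_cancel₀ hδ, one_smul,
          mul_comm δ⁻¹ τ]
      have hun : u ^ n = 1 := by
        rw [hu_def, _root_.smul_pow, ← pow_mul, mul_comm 2 n, pow_mul, hr, _root_.smul_pow,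
          one_pow, smul_smul, inv_pow, ← hδn, inv_mul_cancel₀ (pow_ne_zero _ hδ), one_smul]
      obtain ⟨ζ, hζ⟩ := hroots n hnpos
      have hfac := Polynomial.X_pow_sub_one_eq_prod hnpos hζ
      have hex : ∃ z ∈ Polynomial.nthRootsFinset n (1 : K), Matrix.det (u - z • 1) = 0 := by
        have hd : (∏ z ∈ Polynomial.nthRootsFinset n (1 : K), Matrix.det (u - z • 1)) = 0 := by
          rw [← det_aeval_prod, ← hfac]
          have : Polynomial.aeval u ((X : K[X]) ^ n - 1) = 0 := by
            rw [map_sub, map_pow, Polynomial.aeval_X, _root_.map_one, hun, sub_self]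
          rw [this, Matrix.det_zero]
        exact Finset.prod_eq_zero_iff.1 hd
      obtain ⟨z, hz, hdet0⟩ := hex
      set s := τ * δ⁻¹ with hs
      have hs0 : s ≠ 0 := mul_ne_zero hτ (inv_ne_zero hδ)
      set ρ := (1 + z) * s⁻¹ with hρ
      have hsρ : s * ρ = 1 + z := by
        rw [hρ]; field_simp
      have hfactor : u - z • 1 = s • (N - ρ • 1) := by
        rw [hu2, smul_sub, smul_smul, hsρ, add_smul, one_smul]
        abel
      have hdetN : Matrix.det (N - ρ • 1) = 0 := by
        rw [hfactor, Matrix.det_smul, Fintype.card_fin] at hdet0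
        rcases mul_eq_zero.1 hdet0 with h | h
        · exact absurd h (pow_ne_zero _ hs0)
        · exact h
      have hroot : ρ ^ 2 - τ * ρ + δ = 0 := by
        rw [← det_sub_smul_one]; exact hdetN
      by_cases hrr : ρ = τ - ρ
      · exfalso
        have hτ2 : τ = 2 * ρ := by linear_combination -hrr
        have hδρ : δ = ρ ^ 2 := by linear_combination hroot + ρ * hτ2
        have hρ0 : ρ ≠ 0 := by
          intro h
          rw [h] at hδρ
          simp at hδρ
          exact hδ hδρ
        set M0 := N - ρ • 1 with hM0def
        have hM0 : M0 * M0 = 0 := by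
          have expand : M0 * M0 = N ^ 2 - (2 * ρ) • N + (ρ ^ 2) • 1 := by
            rw [hM0def, pow_two, sub_mul, mul_sub, mul_sub]
            simp only [Matrix.mul_one, Matrix.one_mul, smul_mul_assoc, mul_smul_comm,
              smul_smul, pow_two, two_mul, add_smul]
            abel
          rw [expand, hCH, hτ2, hδρ]
          abel
        have hsval : s = 2 * ρ⁻¹ := by
          rw [hs, hτ2, hδρ]
          field_simp
        have huexp : u = 1 + (2 * ρ⁻¹) • M0 := by
          rw [hu2, hsval, hM0def, smul_sub, smul_smul]
          have h2 : 2 * ρ⁻¹ * ρ = 2 := by field_simp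
          rw [h2, two_smul]
          abel
        rw [huexp, binom_nil M0 hM0 _ n] at hun
        have h0 : ((n : K) * (2 * ρ⁻¹)) • M0 = 0 := by
          have := add_eq_left.mp hun
          exact this
        have hc0 : (n : K) * (2 * ρ⁻¹) ≠ 0 := by
          apply mul_ne_zero
          · exact Nat.cast_ne_zero.2 hnpos.ne'
          · exact mul_ne_zero two_ne_zero (inv_ne_zero hρ0)
        have hM00 : M0 = 0 := (smul_eq_zero.1 h0).resolve_left hc0
        exact hsc ⟨ρ, sub_eq_zero.1 (hM0def ▸ hM00)⟩
      · left
        obtain ⟨C1, hC1, hNC1⟩ := companion_conj N hsc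
        obtain ⟨C2, hC2, hMC2⟩ := comp_to_diag τ δ ρ hroot hrr
        rw [← hδdef, ← hτdef] at hNC1
        have hDdet : Matrix.det !![ρ, 0; 0, τ - ρ] ≠ 0 := by
          have hval : ρ * (τ - ρ) - 0 * 0 = δ := by linear_combination -hroot
          rw [Matrix.det_fin_two_of, hval]
          exact hδ
        have hCdet : Matrix.det (C1 * C2) ≠ 0 := by
          rw [Matrix.det_mul]; exact mul_ne_zero hC1 hC2
        set Cgl := Matrix.GeneralLinearGroup.mkOfDetNeZero _ hCdet with hCgl
        set Dgl := Matrix.GeneralLinearGroup.mkOfDetNeZero _ hDdet with hDgl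
        have hA : A = Cgl * Dgl * Cgl⁻¹ := by
          rw [eq_mul_inv_iff_mul_eq]
          apply Units.ext
          show N * (C1 * C2) = (C1 * C2) * !![ρ, 0; 0, τ - ρ]
          rw [← Matrix.mul_assoc, hNC1, Matrix.mul_assoc, hMC2, Matrix.mul_assoc]
        exact ⟨QuotientGroup.mk Cgl, Dgl, ρ, τ - ρ, rfl,
          by rw [hA, QuotientGroup.mk_mul, QuotientGroup.mk_mul, QuotientGroup.mk_inv]⟩
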